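/- Sharpness of the bounds in Theorem 2: Suppose the observed conditional laws p_z(x, y) = P(X = x, Y = y | Z = z), z ∈ {1,…,K}, arise from some model satisfying assumption (i) with instrument law π (π(z) > 0 for all z). Then for each i, j ∈ {0,1} there exists another model on some probability space — random variables Z, X(z_1),…,X(z_K), Y(x_0), Y(x_1) satisfying assumption (i), with Z having law π and with P(X = x, Y = y | Z = z) = p_z(x, y) for all x, y, z — in which P(Y(x_i) = j) = g(i, j). -/

import Mathlib

open MeasureTheory ProbabilityTheory Set


/-- The bound `g(i, j)` of Theorem 2, expressed in terms of conditional laws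
`p z x y` (interpreted as `P(X = x, Y = y | Z = z)`):
`g(i,j) = min{ min_z [ p_z(X=i,Y=j) + p_z(X=1−i) ],`
`min_{z ≠ z̃} [ p_z(X=i,Y=j) + p_z(X=1−i,Y=0) + p_{z̃}(X=i,Y=j) + p_{z̃}(X=1−i,Y=1) ] }`,
where `p_z(X = 1−i) = p_z(X=1−i, Y=0) + p_z(X=1−i, Y=1)`. -/
noncomputable def gOf {K : ℕ} (hK : 2 ≤ K) (p : Fin K → Fin 2 → Fin 2 → ℝ)
    (i j : Fin 2) : ℝ :=
  min
    ((Finset.univ : Finset (Fin K)).inf'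
      ⟨⟨0, by omega⟩, Finset.mem_univ _⟩
      (fun z => p z i j + (p z (1 - i) 0 + p z (1 - i) 1)))
    (((Finset.univ : Finset (Fin K × Fin K)).filter (fun q => q.1 ≠ q.2)).inf'
      ⟨(⟨0, by omega⟩, ⟨1, by omega⟩), by
        simp only [Finset.mem_filter, Finset.mem_univ, true_and]
        exact fun h => absurd (congrArg Fin.val h) (by simp)⟩
      (fun q => p q.1 i j + p q.1 (1 - i) 0 + p q.2 i j + p q.2 (1 - i) 1))

/-- A binary instrumental-variable model with instrument law `π` and observed conditional
laws `p z x y = P(X = x, Y = y | Z = z)`, satisfying assumption (i): joint independence of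
`Z` from `(Y(x₀), Y(x₁), X(z₁), …, X(z_K))`.  The observed treatment is `X = X(Z)` and the
observed outcome is `Y = Y(X)`. -/
structure IVModel (K : ℕ) (π : Fin K → ℝ) (p : Fin K → Fin 2 → Fin 2 → ℝ) where
  (Ω : Type)
  [m : MeasurableSpace Ω]
  (P : Measure Ω)
  prob : IsProbabilityMeasure P
  Z : Ω → Fin K
  Xz : Fin K → Ω → Fin 2
  Y0 : Ω → Fin 2
  Y1 : Ω → Fin 2
  hZ : Measurable Z
  hXz : ∀ z, Measurable (Xz z)
  hY0 : Measurable Y0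
  hY1 : Measurable Y1
  indep : IndepFun Z (fun ω => (Y0 ω, Y1 ω, fun z => Xz z ω)) P
  law_Z : ∀ z, (P (Z ⁻¹' {z})).toReal = π z
  law_cond : ∀ (z : Fin K) (x y : Fin 2),
    (P[|Z ⁻¹' {z}] {ω | Xz (Z ω) ω = x ∧
      (if Xz (Z ω) ω = 0 then Y0 ω else Y1 ω) = y}).toReal = p z x y



section Helpers

section ProbHelpers

variable {Ω : Type*} [MeasurableSpace Ω] (μ : Measure Ω) [IsProbabilityMeasure μ]

lemma pr_le_one {A : Set Ω} : (μ A).toReal ≤ 1 := by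
  simpa using ENNReal.toReal_mono ENNReal.one_ne_top (prob_le_one (μ := μ) (s := A))

lemma pr_mono {A B : Set Ω} (h : A ⊆ B) : (μ A).toReal ≤ (μ B).toReal :=
  ENNReal.toReal_mono (measure_ne_top μ B) (measure_mono h)

lemma pr_two {A B : Set Ω} (hB : MeasurableSet B) (h : A ∩ B = ∅) :
    (μ A).toReal + (μ B).toReal ≤ 1 := by
  rw [← ENNReal.toReal_add (measure_ne_top μ A) (measure_ne_top μ B),
    ← measure_union (Set.disjoint_iff_inter_eq_empty.mpr h) hB]
  exact pr_le_one μ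

lemma pr_cover4 {A B1 B2 B3 B4 : Set Ω} (h : A ⊆ B1 ∪ B2 ∪ B3 ∪ B4) :
    (μ A).toReal ≤ (μ B1).toReal + (μ B2).toReal + (μ B3).toReal + (μ B4).toReal := by
  have h1 : μ A ≤ μ B1 + μ B2 + μ B3 + μ B4 := by
    refine le_trans (measure_mono h) ?_
    refine le_trans (measure_union_le _ _) (add_le_add_left ?_ _)
    refine le_trans (measure_union_le _ _) (add_le_add_left ?_ _)
    exact measure_union_le _ _
  have h2 := ENNReal.toReal_mono (by
    simp [ENNReal.add_ne_top, measure_ne_top]) h1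
  rw [ENNReal.toReal_add, ENNReal.toReal_add, ENNReal.toReal_add] at h2 <;>
    simp [ENNReal.add_ne_top, measure_ne_top] at *
  exact h2

lemma pr_pair_cover3 {A1 A2 B1 B2 B3 : Set Ω} (hA2 : MeasurableSet A2)
    (h12 : A1 ∩ A2 = ∅) (h : A1 ∪ A2 ⊆ B1 ∪ B2 ∪ B3) :
    (μ A1).toReal + (μ A2).toReal ≤ (μ B1).toReal + (μ B2).toReal + (μ B3).toReal := by
  have h1 : μ A1 + μ A2 ≤ μ B1 + μ B2 + μ B3 := by
    rw [← measure_union (Set.disjoint_iff_inter_eq_empty.mpr h12) hA2]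
    refine le_trans (measure_mono h) ?_
    refine le_trans (measure_union_le _ _) (add_le_add_left ?_ _)
    exact measure_union_le _ _
  have h2 := ENNReal.toReal_mono (by
    simp [ENNReal.add_ne_top, measure_ne_top]) h1
  rw [ENNReal.toReal_add, ENNReal.toReal_add, ENNReal.toReal_add] at h2 <;>
    simp [ENNReal.add_ne_top, measure_ne_top] at *
  exact h2

lemma pr_five_two {A1 A2 A3 A4 A5 : Set Ω}
    (h1 : MeasurableSet A1) (h2 : MeasurableSet A2) (h3 : MeasurableSet A3)
    (h4 : MeasurableSet A4) (h5 : MeasurableSet A5)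
    (h12 : A1 ∩ A2 = ∅) (h34 : A3 ∩ A4 = ∅)
    (hABC : (A1 ∪ A2) ∩ (A3 ∪ A4) ∩ A5 = ∅) :
    (μ A1).toReal + (μ A2).toReal + (μ A3).toReal + (μ A4).toReal + (μ A5).toReal ≤ 2 := by
  have e12 : (μ A1).toReal + (μ A2).toReal = (μ (A1 ∪ A2)).toReal := by
    rw [← ENNReal.toReal_add (measure_ne_top μ A1) (measure_ne_top μ A2),
      measure_union (Set.disjoint_iff_inter_eq_empty.mpr h12) h2]
  have e34 : (μ A3).toReal + (μ A4).toReal = (μ (A3 ∪ A4)).toReal := by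
    rw [← ENNReal.toReal_add (measure_ne_top μ A3) (measure_ne_top μ A4),
      measure_union (Set.disjoint_iff_inter_eq_empty.mpr h34) h4]
  have key : (μ (A1 ∪ A2)).toReal + (μ (A3 ∪ A4)).toReal + (μ A5).toReal ≤ 2 := by
    set U := A1 ∪ A2
    set V := A3 ∪ A4
    have hU : MeasurableSet U := h1.union h2
    have hV : MeasurableSet V := h3.union h4
    have incl : μ (U ∪ V) + μ (U ∩ V) = μ U + μ V := measure_union_add_inter (μ := μ) U hV
    have euv : (μ U).toReal + (μ V).toReal
        = (μ (U ∪ V)).toReal + (μ (U ∩ V)).toReal := by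
      rw [← ENNReal.toReal_add (measure_ne_top _ _) (measure_ne_top _ _),
        ← ENNReal.toReal_add (measure_ne_top _ _) (measure_ne_top _ _), ← incl]
    rw [euv]
    have hone : (μ (U ∪ V)).toReal ≤ 1 := pr_le_one μ
    have htwo' : (μ (U ∩ V)).toReal + (μ A5).toReal ≤ 1 :=
      pr_two μ h5 hABC
    linarith
  linarith

lemma pr_part4 {A1 A2 A3 A4 : Set Ω}
    (h2 : MeasurableSet A2) (h3 : MeasurableSet A3) (h4 : MeasurableSet A4)
    (h12 : A1 ∩ A2 = ∅) (h13 : A1 ∩ A3 = ∅) (h14 : A1 ∩ A4 = ∅)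
    (h23 : A2 ∩ A3 = ∅) (h24 : A2 ∩ A4 = ∅) (h34 : A3 ∩ A4 = ∅)
    (hu : A1 ∪ A2 ∪ A3 ∪ A4 = univ) :
    (μ A1).toReal + (μ A2).toReal + (μ A3).toReal + (μ A4).toReal = 1 := by
  have d12 : Disjoint A1 A2 := Set.disjoint_iff_inter_eq_empty.mpr h12
  have d3 : Disjoint (A1 ∪ A2) A3 := by
    rw [Set.disjoint_iff_inter_eq_empty, Set.union_inter_distrib_right, h13, h23, Set.union_empty]
  have d4 : Disjoint (A1 ∪ A2 ∪ A3) A4 := by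
    rw [Set.disjoint_iff_inter_eq_empty, Set.union_inter_distrib_right,
      Set.union_inter_distrib_right, h14, h24, h34]
    simp
  have : μ A1 + μ A2 + μ A3 + μ A4 = 1 := by
    rw [← measure_union d12 h2, ← measure_union d3 h3, ← measure_union d4 h4, hu]
    exact measure_univ
  have := congrArg ENNReal.toReal this
  rw [ENNReal.toReal_add, ENNReal.toReal_add, ENNReal.toReal_add] at this <;>
    simp [ENNReal.add_ne_top, measure_ne_top] at *
  linarith

end ProbHelpers

lemma indep_fst_comp_snd {α β γ : Type*} [MeasurableSpace α] [MeasurableSpace β]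
    [MeasurableSpace γ] (μ : Measure α) (ν : Measure β)
    [IsProbabilityMeasure μ] [IsProbabilityMeasure ν]
    (F : β → γ) (hF : Measurable F) :
    IndepFun Prod.fst (fun ω : α × β => F ω.2) (μ.prod ν) := by
  have h1 : IndepFun (Prod.fst : α × β → α) (Prod.snd : α × β → β) (μ.prod ν) := by
    rw [indepFun_iff_measure_inter_preimage_eq_mul]
    intro s t hs ht
    have e1 : (Prod.fst ⁻¹' s ∩ Prod.snd ⁻¹' t : Set (α × β)) = s ×ˢ t := by
      ext ⟨a, b⟩; simp [Set.mem_prod]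
    have e2 : (Prod.fst ⁻¹' s : Set (α × β)) = s ×ˢ univ := by
      ext ⟨a, b⟩; simp [Set.mem_prod]
    have e3 : (Prod.snd ⁻¹' t : Set (α × β)) = univ ×ˢ t := by
      ext ⟨a, b⟩; simp [Set.mem_prod]
    rw [e1, e2, e3, Measure.prod_prod, Measure.prod_prod, Measure.prod_prod]
    simp [measure_univ]
  exact h1.comp measurable_id hF

lemma vol2' {u1 v1 u2 v2 : ℝ} (h1 : u1 ≤ v1) (h2 : v1 ≤ u2) (h3 : u2 ≤ v2) :
    ((volume : Measure ℝ) (Set.Ico u1 v1 ∪ Set.Ico u2 v2)).toReal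
      = (v1 - u1) + (v2 - u2) := by
  have hd : Disjoint (Set.Ico u1 v1) (Set.Ico u2 v2) := by
    rw [Set.disjoint_left]
    rintro x ⟨hx1, hx2⟩ ⟨hx3, hx4⟩
    linarith
  rw [measure_union hd measurableSet_Ico, Real.volume_Ico, Real.volume_Ico,
    ENNReal.toReal_add ENNReal.ofReal_ne_top ENNReal.ofReal_ne_top,
    ENNReal.toReal_ofReal (by linarith), ENNReal.toReal_ofReal (by linarith)]

end Helpers

section Arith
open Finset

lemma exists_params {K : ℕ} (hK : 2 ≤ K) (a b c d : Fin K → ℝ) (g : ℝ)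
    (hsum : ∀ z, a z + b z + c z + d z = 1)
    (ha : ∀ z, 0 ≤ a z) (hb : ∀ z, 0 ≤ b z) (hc : ∀ z, 0 ≤ c z) (hd : ∀ z, 0 ≤ d z)
    (hg1 : ∀ z, g ≤ 1 - b z)
    (hlo : ∀ z w, a z + c z ≤ g + b w + c w)
    (hag : ∀ z, a z ≤ g)
    (hcd : ∀ z w, c z + d w ≤ 1)
    (hT4 : ∀ z w v, b z + c z + a w + c w + d v ≤ 2)
    (hT5 : ∀ z w v, c z ≤ a w + c w + b v + c v)
    (hg2 : ∀ z w, g ≤ a z + d z + a w + c w) :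
    ∃ (m1 n1 : ℝ) (α1 β1 : Fin K → ℝ),
      0 ≤ m1 ∧ m1 ≤ g ∧ 0 ≤ n1 ∧ g + n1 ≤ 1 ∧
      ∀ z, 0 ≤ α1 z ∧ α1 z ≤ m1 ∧ α1 z ≤ a z ∧ a z - α1 z ≤ g - m1 ∧
           0 ≤ β1 z ∧ β1 z ≤ n1 ∧ β1 z ≤ b z ∧ b z - β1 z ≤ 1 - g - n1 ∧
           (m1 - α1 z) + (n1 - β1 z) = c z := by
  have hne : (Finset.univ : Finset (Fin K)).Nonempty := ⟨⟨0, by omega⟩, mem_univ _⟩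
  set z0 : Fin K := ⟨0, by omega⟩ with hz0
  have hg0 : 0 ≤ g := le_trans (ha z0) (hag z0)
  have hg1' : g ≤ 1 := by have := hg1 z0; have := hb z0; linarith
  -- extrema
  obtain ⟨zA, _, hzA⟩ := Finset.exists_mem_eq_sup' hne (fun z => a z + c z)
  obtain ⟨zB, _, hzB⟩ := Finset.exists_mem_eq_sup' hne (fun z => b z + c z)
  obtain ⟨zC, _, hzC⟩ := Finset.exists_mem_eq_sup' hne c
  obtain ⟨zV, _, hzV⟩ := Finset.exists_mem_eq_inf' hne (fun z => b z + c z)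
  set Amax := univ.sup' hne (fun z => a z + c z) with hAmax
  set Bmax := univ.sup' hne (fun z => b z + c z) with hBmax
  set Cmax := univ.sup' hne c with hCmax
  set IU := univ.inf' hne (fun z => a z + c z) with hIU
  set IV := univ.inf' hne (fun z => b z + c z) with hIV
  have hAge : ∀ z, a z + c z ≤ Amax := fun z => by
    rw [hAmax]; exact Finset.le_sup' (fun z => a z + c z) (mem_univ z)
  have hBge : ∀ z, b z + c z ≤ Bmax := fun z => by
    rw [hBmax]; exact Finset.le_sup' (fun z => b z + c z) (mem_univ z)
  have hCge : ∀ z, c z ≤ Cmax := fun z => by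
    rw [hCmax]; exact Finset.le_sup' c (mem_univ z)
  have hIUle : ∀ z, IU ≤ a z + c z := fun z => by
    rw [hIU]; exact Finset.inf'_le (fun z => a z + c z) (mem_univ z)
  have hIVle : ∀ z, IV ≤ b z + c z := fun z => by
    rw [hIV]; exact Finset.inf'_le (fun z => b z + c z) (mem_univ z)
  set Um := min g IU with hUm
  set Un := min (1 - g) IV with hUn
  set Lm := max 0 (Bmax - (1 - g)) with hLm
  set Ln := max 0 (Amax - g) with hLn
  set m1 := max Lm (Cmax - Un) with hm1
  set n1 := max Ln (Cmax - m1) with hn1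
  -- basic bounds on Un
  have hUn_le1g : Un ≤ 1 - g := min_le_left _ _
  have hUn_leIV : Un ≤ IV := min_le_right _ _
  -- Lm ≤ Um
  have hLm_g : Lm ≤ g := by
    apply max_le hg0
    rw [hzB]; have := hsum zB; have := ha zB; have := hd zB; linarith
  have hLm_IU : Lm ≤ IU := by
    apply Finset.le_inf'
    intro z _
    apply max_le (by have := ha z; have := hc z; linarith)
    rw [hzB]
    have h2 := hg2 zB z
    have := hsum zB
    linarith
  -- Cmax − Un ≤ Um
  have hCU_g : Cmax - Un ≤ g := by
    rw [hzC]
    rcases min_choice (1 - g) IV with h | h <;> rw [hUn, h]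
    · have := hc zC; have := hsum zC; have := ha zC; have := hb zC; have := hd zC; linarith
    · rw [hzV]
      have := hlo zC zV; have := ha zC; linarith
  have hCU_IU : Cmax - Un ≤ IU := by
    apply Finset.le_inf'
    intro z _
    rw [hzC]
    rcases min_choice (1 - g) IV with h | h <;> rw [hUn, h]
    · have := hcd zC z; have h1 := hg1 z; have := hsum z; linarith
    · rw [hzV]; have := hT5 zC z zV; linarith
  have hm1Um : m1 ≤ Um := max_le (le_min hLm_g hLm_IU) (le_min hCU_g hCU_IU)
  have hm1g : m1 ≤ g := le_trans hm1Um (min_le_left _ _)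
  have hm1IU : m1 ≤ IU := le_trans hm1Um (min_le_right _ _)
  have hm1_0 : 0 ≤ m1 := le_trans (le_max_left 0 _) (le_max_left _ _)
  -- Ln ≤ Un
  have hLn_Un : Ln ≤ Un := by
    apply le_min
    · apply max_le (by linarith)
      rw [hzA]; have := hsum zA; have := hb zA; have := hd zA; linarith
    · apply Finset.le_inf'
      intro z _
      apply max_le (by have := hb z; have := hc z; linarith)
      rw [hzA]; have := hlo zA z; linarith
  have hn1Un : n1 ≤ Un := by
    apply max_le hLn_Un
    have : Cmax - Un ≤ m1 := le_max_right _ _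
    linarith
  have hn1_0 : 0 ≤ n1 := le_trans (le_max_left 0 _) (le_max_left _ _)
  have hn1_1g : n1 ≤ 1 - g := le_trans hn1Un hUn_le1g
  have hn1IV : n1 ≤ IV := le_trans hn1Un hUn_leIV
  -- c z ≤ m1 + n1
  have hS_low : ∀ z, c z ≤ m1 + n1 := by
    intro z
    have h1 : Cmax - m1 ≤ n1 := le_max_right _ _
    have := hCge z; linarith
  -- m1 + n1 ≤ 1 − d z
  have hLL : ∀ v, Lm + Ln ≤ 1 - d v := by
    intro v
    rcases max_choice 0 (Bmax - (1 - g)) with h | h <;>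
      rcases max_choice 0 (Amax - g) with h' | h' <;> rw [hLm, h, hLn, h']
    · have := hd v; have := hsum v; have := ha v; have := hb v; have := hc v; linarith
    · rw [hzA]; have := hlo zA v; have := hsum v; have := ha v; linarith
    · rw [hzB]; have := hg1 zB; have := hcd zB v; linarith
    · rw [hzA, hzB]; have := hT4 zB zA v; linarith
  have hS_high : ∀ v, m1 + n1 ≤ 1 - d v := by
    intro v
    rcases max_choice Ln (Cmax - m1) with h | h <;> rw [hn1, h]
    · rcases max_choice Lm (Cmax - Un) with h2 | h2 <;> rw [hm1, h2]
      · exact hLL v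
      · rcases min_choice (1 - g) IV with h3 | h3 <;>
          rcases max_choice 0 (Amax - g) with h4 | h4 <;> rw [hUn, h3, hLn, h4] <;> rw [hzC]
        · have := hcd zC v; linarith
        · rw [hzA]; have := hcd zC v; have := hsum zA; have := hb zA; have := hd zA; linarith
        · rw [hzV]; have := hcd zC v; have := hb zV; have := hc zV; linarith
        · rw [hzA, hzV]; have := hcd zC v; have := hlo zA zV; linarith
    · rw [hzC]; have := hcd zC v; linarith
  -- per z construction
  set m0 := g - m1 with hm0
  set n0 := 1 - g - n1 with hn0
  have hm0_0 : 0 ≤ m0 := by rw [hm0]; linarith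
  have hn0_0 : 0 ≤ n0 := by rw [hn0]; linarith
  refine ⟨m1, n1, fun z => max (max 0 (a z - m0)) ((m1 + n1 - c z) - min (b z) n1),
    fun z => (m1 + n1 - c z) - max (max 0 (a z - m0)) ((m1 + n1 - c z) - min (b z) n1),
    hm1_0, hm1g, hn1_0, by linarith, ?_⟩
  intro z
  beta_reduce
  set S := m1 + n1 - c z with hS
  set A1 := max (max 0 (a z - m0)) (S - min (b z) n1) with hA1
  have haz := ha z; have hbz := hb z; have hcz := hc z; have hdz := hd z
  have hsz := hsum z
  have hm1ac : m1 ≤ a z + c z := le_trans hm1IU (hIUle z)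
  have hn1bc : n1 ≤ b z + c z := le_trans hn1IV (hIVle z)
  have hSl := hS_low z
  have hSh := hS_high z
  have hagz := hag z
  have hg1z := hg1 z
  have hLm_le : Bmax - (1 - g) ≤ m1 := le_trans (le_max_right 0 _) (le_max_left _ _)
  have hLn_le : Amax - g ≤ n1 := le_trans (le_max_right 0 _) (le_max_left _ _)
  have hBz : b z + c z - (1 - g) ≤ m1 := by have := hBge z; linarith
  have hAz : a z + c z - g ≤ n1 := by have := hAge z; linarith
  -- α1 upper bound
  have hA1_le : A1 ≤ min (a z) m1 := by
    apply max_le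
    · apply max_le (le_min haz hm1_0)
      apply le_min (by linarith) (by linarith)
    · rcases min_choice (b z) n1 with h | h <;> rw [h] <;>
        apply le_min <;> rw [hS] <;> linarith
  have hA1_0 : 0 ≤ A1 := le_trans (le_max_left 0 _) (le_max_left _ _)
  have hA1_am0 : a z - m0 ≤ A1 := le_trans (le_max_right 0 _) (le_max_left _ _)
  have hA1_S : S - min (b z) n1 ≤ A1 := le_max_right _ _
  -- β1 = S − A1 bounds
  have hβ_le : S - A1 ≤ min (b z) n1 := by linarith
  have hβ_ge : max 0 (b z - n0) ≤ S - A1 := by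
    have key : A1 ≤ S - max 0 (b z - n0) := by
      apply max_le
      · rcases max_choice 0 (a z - m0) with h | h <;>
          rcases max_choice 0 (b z - n0) with h' | h' <;> rw [h, h'] <;>
          rw [hS] <;> [skip; skip; skip; skip] <;>
          first
          | linarith
          | (rw [hm0] at *; rw [hn0] at *; linarith)
      · have h1 : max 0 (b z - n0) ≤ min (b z) n1 := by
          apply max_le (le_min hbz hn1_0)
          apply le_min (by linarith) (by rw [hn0]; linarith)
        linarith
    linarith
  have hA1_az : A1 ≤ a z := le_trans hA1_le (min_le_left _ _)
  have hA1_m1 : A1 ≤ m1 := le_trans hA1_le (min_le_right _ _)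
  have hβ_n1 : S - A1 ≤ n1 := le_trans hβ_le (min_le_right _ _)
  have hβ_bz : S - A1 ≤ b z := le_trans hβ_le (min_le_left _ _)
  have hβ_0 : 0 ≤ S - A1 := le_trans (le_max_left 0 _) hβ_ge
  have hβ_n0 : b z - n0 ≤ S - A1 := le_trans (le_max_right 0 _) hβ_ge
  refine ⟨hA1_0, hA1_m1, hA1_az, by rw [hm0] at hA1_am0; linarith, hβ_0, hβ_n1, hβ_bz,
    by rw [hn0] at hβ_n0; linarith, by rw [hS]; ring⟩

end Arith

namespace IVModel

variable {K : ℕ} {π : Fin K → ℝ} {p : Fin K → Fin 2 → Fin 2 → ℝ}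

/-- the event `X(z) = x, Y_x = y` -/
def E (M : IVModel K π p) (z : Fin K) (x y : Fin 2) : Set M.Ω :=
  @setOf M.Ω fun ω => M.Xz z ω = x ∧ (if x = 0 then M.Y0 ω else M.Y1 ω) = y

lemma measE (M : IVModel K π p) (z : Fin K) (x y : Fin 2) :
    MeasurableSet[M.m] (M.E z x y) := by
  have h1 : MeasurableSet[M.m] {ω | M.Xz z ω = x} := M.hXz z (measurableSet_singleton x)
  have h2 : MeasurableSet[M.m] {ω | (if x = 0 then M.Y0 ω else M.Y1 ω) = y} := by
    by_cases hx : x = 0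
    · simp only [hx, if_true]
      exact M.hY0 (measurableSet_singleton y)
    · simp only [hx, if_false]
      exact M.hY1 (measurableSet_singleton y)
  exact h1.inter h2

lemma p_eq (M : IVModel K π p) (hπpos : ∀ z, 0 < π z) (z : Fin K) (x y : Fin 2) :
    (M.P (M.E z x y)).toReal = p z x y := by
  letI := M.m
  haveI := M.prob
  have hs : MeasurableSet[M.m] (M.Z ⁻¹' {z}) := M.hZ (measurableSet_singleton z)
  have hsne : M.P (M.Z ⁻¹' {z}) ≠ 0 := by
    intro h
    have := M.law_Z z
    rw [h] at this
    simp at this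
    exact absurd this.symm (hπpos z).ne'
  have hstop : M.P (M.Z ⁻¹' {z}) ≠ ⊤ := measure_ne_top _ _
  -- the event as a preimage under the response tuple
  set T : M.Ω → Fin 2 × Fin 2 × (Fin K → Fin 2) :=
    fun ω => (M.Y0 ω, M.Y1 ω, fun w => M.Xz w ω) with hT
  have hTmeas : Measurable T :=
    (M.hY0.prodMk (M.hY1.prodMk (measurable_pi_lambda _ M.hXz)))
  set S : Set (Fin 2 × Fin 2 × (Fin K → Fin 2)) :=
    {t | t.2.2 z = x ∧ (if x = 0 then t.1 else t.2.1) = y} with hSdef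
  have hSmeas : MeasurableSet S := by
    have hm1 : Measurable (fun t : Fin 2 × Fin 2 × (Fin K → Fin 2) => t.2.2 z) :=
      (measurable_pi_apply z).comp (measurable_snd.comp measurable_snd)
    have h1 : MeasurableSet {t : Fin 2 × Fin 2 × (Fin K → Fin 2) | t.2.2 z = x} :=
      hm1 (measurableSet_singleton x)
    have h2 : MeasurableSet {t : Fin 2 × Fin 2 × (Fin K → Fin 2) |
        (if x = 0 then t.1 else t.2.1) = y} := by
      by_cases hx : x = 0
      · simp only [hx, if_true]
        exact measurable_fst (measurableSet_singleton y)
      · simp only [hx, if_false]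
        exact (measurable_fst.comp measurable_snd) (measurableSet_singleton y)
    exact h1.inter h2
  have hET : M.E z x y = T ⁻¹' S := by
    ext ω
    simp only [E, Set.mem_setOf_eq, Set.mem_preimage, hSdef, hT]
    exact Iff.rfl
  have hkey : M.P (M.Z ⁻¹' {z} ∩ T ⁻¹' S)
      = M.P (M.Z ⁻¹' {z}) * M.P (T ⁻¹' S) :=
    M.indep.measure_inter_preimage_eq_mul {z} S (measurableSet_singleton z) hSmeas
  have hAset : M.Z ⁻¹' {z} ∩ {ω | M.Xz (M.Z ω) ω = x ∧
      (if M.Xz (M.Z ω) ω = 0 then M.Y0 ω else M.Y1 ω) = y}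
      = M.Z ⁻¹' {z} ∩ M.E z x y := by
    ext ω
    simp only [Set.mem_inter_iff, Set.mem_preimage, Set.mem_singleton_iff,
      Set.mem_setOf_eq, E]
    constructor
    · rintro ⟨hz, hx, hy⟩
      rw [hz] at hx hy
      rw [hx] at hy
      exact ⟨hz, hx, hy⟩
    · rintro ⟨hz, hx, hy⟩
      rw [← hx] at hy
      rw [← hz] at hx hy
      exact ⟨hz, hx, hy⟩
  have := M.law_cond z x y
  rw [ProbabilityTheory.cond_apply hs, hAset, hET, hkey, ← mul_assoc,
    ENNReal.inv_mul_cancel hsne hstop, one_mul] at this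
  rw [hET]
  exact this

end IVModel


section Master

open Finset in
set_option maxHeartbeats 2000000 in
lemma master {K : ℕ} (hK : 2 ≤ K) (π : Fin K → ℝ) (hπpos : ∀ z, 0 < π z)
    (p : Fin K → Fin 2 → Fin 2 → ℝ) (M0 : IVModel K π p) (i j : Fin 2) :
    ∃ M : IVModel K π p,
      (M.P {ω | (if i = 0 then M.Y0 ω else M.Y1 ω) = j}).toReal = gOf hK p i j := by
  letI := M0.m
  haveI := M0.prob
  -- Fin 2 facts
  have hfin : ∀ v w : Fin 2, v = w ∨ v = 1 - w := by decide
  have hfin01 : ∀ v : Fin 2, v = 0 ∨ v = 1 := by decide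
  have hne2 : ∀ v : Fin 2, v ≠ 1 - v := by decide
  have hne2' : ∀ v : Fin 2, 1 - v ≠ v := by decide
  -- events in the old model
  have hpE : ∀ z x y, (M0.P (M0.E z x y)).toReal = p z x y := M0.p_eq hπpos
  have hEm : ∀ z x y, MeasurableSet[M0.m] (M0.E z x y) := M0.measE
  have hpnn : ∀ z x y, 0 ≤ p z x y := by
    intro z x y; rw [← hpE]; exact ENNReal.toReal_nonneg
  -- the set {Y_i = j} in the old model
  set Sj : Set M0.Ω := {ω | (if i = 0 then M0.Y0 ω else M0.Y1 ω) = j} with hSj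
  have hSjm : MeasurableSet[M0.m] Sj := by
    by_cases hi : i = 0
    · simp only [hSj, hi, if_true]
      exact M0.hY0 (measurableSet_singleton j)
    · simp only [hSj, hi, if_false]
      exact M0.hY1 (measurableSet_singleton j)
  set Pstar : ℝ := (M0.P Sj).toReal with hPstar
  -- pointwise membership helpers
  have hmemE : ∀ z x y (ω : M0.Ω), ω ∈ M0.E z x y ↔
      (M0.Xz z ω = x ∧ (if x = 0 then M0.Y0 ω else M0.Y1 ω) = y) := fun z x y ω => Iff.rfl
  -- abbreviations for the observed cells
  -- a z = p z i j, b z = p z i (1-j), c z = p z (1-i) 1, d z = p z (1-i) 0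
  -- partition fact
  have hsum : ∀ z, p z i j + p z i (1 - j) + p z (1 - i) 1 + p z (1 - i) 0 = 1 := by
    intro z
    rw [← hpE z i j, ← hpE z i (1-j), ← hpE z (1-i) 1, ← hpE z (1-i) 0]
    apply pr_part4 M0.P (hEm _ _ _) (hEm _ _ _) (hEm _ _ _)
    · ext ω
      simp only [hmemE, Set.mem_inter_iff, Set.mem_empty_iff_false, iff_false]
      rintro ⟨⟨hx1, hy1⟩, hx2, hy2⟩
      rw [hy1] at hy2
      exact hne2 j hy2
    · ext ω
      simp only [hmemE, Set.mem_inter_iff, Set.mem_empty_iff_false, iff_false]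
      rintro ⟨⟨hx1, -⟩, hx2, -⟩
      rw [hx1] at hx2
      exact hne2 i hx2
    · ext ω
      simp only [hmemE, Set.mem_inter_iff, Set.mem_empty_iff_false, iff_false]
      rintro ⟨⟨hx1, -⟩, hx2, -⟩
      rw [hx1] at hx2
      exact hne2 i hx2
    · ext ω
      simp only [hmemE, Set.mem_inter_iff, Set.mem_empty_iff_false, iff_false]
      rintro ⟨⟨hx1, -⟩, hx2, -⟩
      rw [hx1] at hx2
      exact hne2 i hx2
    · ext ω
      simp only [hmemE, Set.mem_inter_iff, Set.mem_empty_iff_false, iff_false]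
      rintro ⟨⟨hx1, -⟩, hx2, -⟩
      rw [hx1] at hx2
      exact hne2 i hx2
    · ext ω
      simp only [hmemE, Set.mem_inter_iff, Set.mem_empty_iff_false, iff_false]
      rintro ⟨⟨hx1, hy1⟩, hx2, hy2⟩
      rw [hy1] at hy2
      exact absurd hy2 (by decide)
    · ext ω
      simp only [hmemE, Set.mem_union, Set.mem_univ, iff_true]
      rcases hfin (M0.Xz z ω) i with h | h
      · rcases hfin ((if i = 0 then M0.Y0 ω else M0.Y1 ω)) j with h2 | h2
        · exact Or.inl (Or.inl (Or.inl ⟨h, h2⟩))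
        · exact Or.inl (Or.inl (Or.inr ⟨h, h2⟩))
      · rcases hfin01 ((if (1 - i : Fin 2) = 0 then M0.Y0 ω else M0.Y1 ω)) with h2 | h2
        · exact Or.inr ⟨h, h2⟩
        · exact Or.inl (Or.inr ⟨h, h2⟩)
  -- M1 : a z + b w ≤ 1
  have hM1 : ∀ z w, p z i j + p w i (1 - j) ≤ 1 := by
    intro z w
    rw [← hpE z i j, ← hpE w i (1-j)]
    apply pr_two M0.P (hEm _ _ _)
    ext ω
    simp only [hmemE, Set.mem_inter_iff, Set.mem_empty_iff_false, iff_false]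
    rintro ⟨⟨-, hy1⟩, -, hy2⟩
    rw [hy1] at hy2
    exact hne2 j hy2
  -- M2 : c z + d w ≤ 1
  have hM2 : ∀ z w, p z (1-i) 1 + p w (1-i) 0 ≤ 1 := by
    intro z w
    rw [← hpE z (1-i) 1, ← hpE w (1-i) 0]
    apply pr_two M0.P (hEm _ _ _)
    ext ω
    simp only [hmemE, Set.mem_inter_iff, Set.mem_empty_iff_false, iff_false]
    rintro ⟨⟨-, hy1⟩, -, hy2⟩
    rw [hy1] at hy2
    exact absurd hy2 (by decide)
  -- M3 : Pstar + b z ≤ 1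
  have hM3 : ∀ z, Pstar + p z i (1 - j) ≤ 1 := by
    intro z
    rw [hPstar, ← hpE z i (1-j)]
    apply pr_two M0.P (hEm _ _ _)
    ext ω
    simp only [hmemE, hSj, Set.mem_setOf_eq, Set.mem_inter_iff, Set.mem_empty_iff_false,
      iff_false]
    rintro ⟨hy1, -, hy2⟩
    rw [hy1] at hy2
    exact hne2 j hy2
  -- M5 : a z ≤ Pstar
  have hM5 : ∀ z, p z i j ≤ Pstar := by
    intro z
    rw [hPstar, ← hpE z i j]
    apply pr_mono M0.P
    intro ω hω
    exact hω.2
  -- M4 : Pstar ≤ a z + d z + a w + c w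
  have hM4 : ∀ z w, Pstar ≤ p z i j + p z (1-i) 0 + p w i j + p w (1-i) 1 := by
    intro z w
    rw [hPstar, ← hpE z i j, ← hpE z (1-i) 0, ← hpE w i j, ← hpE w (1-i) 1]
    apply pr_cover4 M0.P
    intro ω hω
    simp only [hSj, Set.mem_setOf_eq] at hω
    simp only [Set.mem_union, hmemE]
    rcases hfin (M0.Xz z ω) i with h | h
    · exact Or.inl (Or.inl (Or.inl ⟨h, hω⟩))
    · rcases hfin01 ((if (1 - i : Fin 2) = 0 then M0.Y0 ω else M0.Y1 ω)) with h2 | h2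
      · exact Or.inl (Or.inl (Or.inr ⟨h, h2⟩))
      · rcases hfin (M0.Xz w ω) i with h3 | h3
        · exact Or.inl (Or.inr ⟨h3, hω⟩)
        · exact Or.inr ⟨h3, h2⟩
  -- M6 : a z + c z ≤ Pstar + b w + c w
  have hM6 : ∀ z w, p z i j + p z (1-i) 1 ≤ Pstar + p w i (1-j) + p w (1-i) 1 := by
    intro z w
    rw [hPstar, ← hpE z i j, ← hpE z (1-i) 1, ← hpE w i (1-j), ← hpE w (1-i) 1]
    apply pr_pair_cover3 M0.P (hEm _ _ _)
    · ext ω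
      simp only [hmemE, Set.mem_inter_iff, Set.mem_empty_iff_false, iff_false]
      rintro ⟨⟨hx1, -⟩, hx2, -⟩
      rw [hx1] at hx2
      exact hne2 i hx2
    · rintro ω (⟨hx, hy⟩ | ⟨hx, hy⟩)
      · exact Or.inl (Or.inl hy)
      · rcases hfin (M0.Xz w ω) i with h3 | h3
        · rcases hfin ((if i = 0 then M0.Y0 ω else M0.Y1 ω)) j with h2 | h2
          · exact Or.inl (Or.inl h2)
          · exact Or.inl (Or.inr ⟨h3, h2⟩)
        · exact Or.inr ⟨h3, hy⟩
  -- M7 : b z + c z + a w + c w + d v ≤ 2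
  have hM7 : ∀ z w v, p z i (1-j) + p z (1-i) 1 + p w i j + p w (1-i) 1 + p v (1-i) 0 ≤ 2 := by
    intro z w v
    rw [← hpE z i (1-j), ← hpE z (1-i) 1, ← hpE w i j, ← hpE w (1-i) 1, ← hpE v (1-i) 0]
    apply pr_five_two M0.P (hEm _ _ _) (hEm _ _ _) (hEm _ _ _) (hEm _ _ _) (hEm _ _ _)
    · ext ω
      simp only [hmemE, Set.mem_inter_iff, Set.mem_empty_iff_false, iff_false]
      rintro ⟨⟨hx1, -⟩, hx2, -⟩
      rw [hx1] at hx2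
      exact hne2 i hx2
    · ext ω
      simp only [hmemE, Set.mem_inter_iff, Set.mem_empty_iff_false, iff_false]
      rintro ⟨⟨hx1, -⟩, hx2, -⟩
      rw [hx1] at hx2
      exact hne2 i hx2
    · ext ω
      simp only [hmemE, Set.mem_inter_iff, Set.mem_union, Set.mem_empty_iff_false, iff_false]
      rintro ⟨⟨h12, h34⟩, -, hy5⟩
      rcases h12 with ⟨_, hy1⟩ | ⟨_, hy1⟩
      · rcases h34 with ⟨-, hy3⟩ | ⟨-, hy3⟩
        · rw [hy1] at hy3
          exact hne2' j hy3
        · rw [hy3] at hy5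
          exact absurd hy5 (by decide)
      · rw [hy1] at hy5
        exact absurd hy5 (by decide)
  -- M8 : c z ≤ a w + c w + b v + c v
  have hM8 : ∀ z w v, p z (1-i) 1 ≤ p w i j + p w (1-i) 1 + p v i (1-j) + p v (1-i) 1 := by
    intro z w v
    rw [← hpE z (1-i) 1, ← hpE w i j, ← hpE w (1-i) 1, ← hpE v i (1-j), ← hpE v (1-i) 1]
    apply pr_cover4 M0.P
    rintro ω ⟨hx, hy⟩
    simp only [Set.mem_union, hmemE]
    rcases hfin (M0.Xz w ω) i with h | h
    · rcases hfin ((if i = 0 then M0.Y0 ω else M0.Y1 ω)) j with h2 | h2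
      · exact Or.inl (Or.inl (Or.inl ⟨h, h2⟩))
      · rcases hfin (M0.Xz v ω) i with h3 | h3
        · exact Or.inl (Or.inr ⟨h3, h2⟩)
        · exact Or.inr ⟨h3, hy⟩
    · exact Or.inl (Or.inl (Or.inr ⟨h, hy⟩))
  -- facts about g
  set g : ℝ := gOf hK p i j with hgdef
  have hg_term1 : ∀ z, g ≤ p z i j + (p z (1-i) 0 + p z (1-i) 1) := by
    intro z
    refine le_trans (min_le_left _ _) ?_
    exact Finset.inf'_le (fun z => p z i j + (p z (1 - i) 0 + p z (1 - i) 1)) (mem_univ z)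
  have hg_term2 : ∀ z w, z ≠ w →
      g ≤ p z i j + p z (1-i) 0 + p w i j + p w (1-i) 1 := by
    intro z w hzw
    refine le_trans (min_le_right _ _) ?_
    exact Finset.inf'_le (f := fun q : Fin K × Fin K => p q.1 i j + p q.1 (1 - i) 0
      + p q.2 i j + p q.2 (1 - i) 1) (b := (z, w))
      (Finset.mem_filter.mpr ⟨Finset.mem_univ _, hzw⟩)
  have hPg : Pstar ≤ g := by
    rw [hgdef]
    unfold gOf
    refine le_min (Finset.le_inf' _ _ fun z _ => ?_)
      (Finset.le_inf' _ _ fun (q : Fin K × Fin K) _ => ?_)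
    · have h3 := hM3 z
      have := hsum z
      linarith
    · exact hM4 q.1 q.2
  -- hypotheses for exists_params
  have hg1 : ∀ z, g ≤ 1 - p z i (1-j) := by
    intro z
    have := hg_term1 z
    have := hsum z
    linarith
  have hg2 : ∀ z w, g ≤ p z i j + p z (1-i) 0 + p w i j + p w (1-i) 1 := by
    intro z w
    by_cases hzw : z = w
    · subst hzw
      have := hg_term1 z
      have := hpnn z i j
      linarith
    · exact hg_term2 z w hzw
  have hag : ∀ z, p z i j ≤ g := fun z => le_trans (hM5 z) hPg
  have hlo : ∀ z w, p z i j + p z (1-i) 1 ≤ g + p w i (1-j) + p w (1-i) 1 := by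
    intro z w
    have := hM6 z w
    linarith
  obtain ⟨m1, n1, α1, β1, hm10, hm1g, hn10, hgn11, hper⟩ :=
    exists_params hK (fun z => p z i j) (fun z => p z i (1-j)) (fun z => p z (1-i) 1)
      (fun z => p z (1-i) 0) g hsum (fun z => hpnn z i j) (fun z => hpnn z i (1-j))
      (fun z => hpnn z (1-i) 1) (fun z => hpnn z (1-i) 0) hg1 hlo hag
      (fun z w => hM2 z w) (fun z w v => hM7 z w v) (fun z w v => hM8 z w v) hg2
  have hg0 : 0 ≤ g := le_trans (hpnn ⟨0, by omega⟩ i j) (hag _)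
  have hg1' : g ≤ 1 := by
    have := hg1 ⟨0, by omega⟩
    have := hpnn ⟨0, by omega⟩ i (1-j)
    linarith
  -- restated per-z facts
  have hper' : ∀ z, 0 ≤ α1 z ∧ α1 z ≤ m1 ∧ α1 z ≤ p z i j ∧ p z i j - α1 z ≤ g - m1 ∧
      0 ≤ β1 z ∧ β1 z ≤ n1 ∧ β1 z ≤ p z i (1-j) ∧ p z i (1-j) - β1 z ≤ 1 - g - n1 ∧
      (m1 - α1 z) + (n1 - β1 z) = p z (1-i) 1 := hper
  clear hper
  -- the uniform measure on [0,1)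
  set μu : Measure ℝ := volume.restrict (Set.Ico (0:ℝ) 1) with hμu
  haveI hμuprob : IsProbabilityMeasure μu := by
    constructor
    rw [hμu, Measure.restrict_apply MeasurableSet.univ, Set.univ_inter, Real.volume_Ico]
    norm_num
  have hπsum : ∑ z, π z = 1 := by
    have h1 : ∑ z, M0.P (M0.Z ⁻¹' {z}) = M0.P Set.univ := by
      rw [MeasureTheory.sum_measure_preimage_singleton Finset.univ
        (fun y _ => M0.hZ (measurableSet_singleton y))]
      simp
    have h2 := congrArg ENNReal.toReal h1
    rw [ENNReal.toReal_sum (fun a _ => measure_ne_top _ _)] at h2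
    simp only [M0.law_Z, measure_univ, ENNReal.toReal_one] at h2
    exact h2
  -- the instrument law
  set ν : Measure (Fin K) := Measure.sum (fun z => (ENNReal.ofReal (π z)) • Measure.dirac z)
    with hν
  have hν_apply : ∀ s : Set (Fin K), ν s = ∑ w, ENNReal.ofReal (π w) * s.indicator 1 w := by
    intro s
    have hsm : MeasurableSet s := MeasurableSet.of_discrete
    rw [hν, Measure.sum_apply _ hsm, tsum_fintype]
    congr 1
    ext w
    rw [Measure.smul_apply, Measure.dirac_apply' _ hsm, smul_eq_mul]
  have hν_single : ∀ w, ν {w} = ENNReal.ofReal (π w) := by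
    intro w
    rw [hν_apply]
    rw [Finset.sum_eq_single w]
    · simp
    · intro w' _ hw'
      rw [Set.indicator_of_notMem (by simpa using hw'), mul_zero]
    · intro h
      exact absurd (Finset.mem_univ w) h
  have hν_univ : ν Set.univ = 1 := by
    rw [hν_apply]
    simp only [Set.indicator_univ, Pi.one_apply, mul_one]
    rw [← ENNReal.ofReal_sum_of_nonneg (fun z _ => (hπpos z).le), hπsum, ENNReal.ofReal_one]
  haveI hνprob : IsProbabilityMeasure ν := ⟨hν_univ⟩
  set Pnew : Measure (Fin K × ℝ) := ν.prod μu with hPnew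
  haveI hPnewprob : IsProbabilityMeasure Pnew := by
    rw [hPnew]; exact MeasureTheory.Measure.prod.instIsProbabilityMeasure ν μu
  -- the new random variables
  set XS : Fin K → Set ℝ := fun z => Set.Ico 0 (α1 z) ∪ Set.Ico m1 (m1 + (p z i j - α1 z))
    ∪ Set.Ico g (g + β1 z) ∪ Set.Ico (g + n1) (g + n1 + (p z i (1-j) - β1 z)) with hXS
  set YS : Set ℝ := Set.Ico 0 m1 ∪ Set.Ico g (g + n1) with hYS
  set Yi' : ℝ → Fin 2 := fun u => if u ∈ Set.Ico (0:ℝ) g then j else 1 - j with hYi'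
  set Yc' : ℝ → Fin 2 := fun u => if u ∈ YS then 1 else 0 with hYc'
  set X' : Fin K → ℝ → Fin 2 := fun z u => if u ∈ XS z then i else 1 - i with hX'
  set Y0' : ℝ → Fin 2 := fun u => if i = 0 then Yi' u else Yc' u with hY0'
  set Y1' : ℝ → Fin 2 := fun u => if i = 0 then Yc' u else Yi' u with hY1'
  -- measurability
  have hXSm : ∀ z, MeasurableSet (XS z) := by
    intro z
    rw [hXS]
    exact ((measurableSet_Ico.union measurableSet_Ico).union measurableSet_Ico).union
      measurableSet_Ico
  have hYSm : MeasurableSet YS := by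
    rw [hYS]; exact measurableSet_Ico.union measurableSet_Ico
  have hYi'm : Measurable Yi' := by
    rw [hYi']; exact Measurable.ite measurableSet_Ico measurable_const measurable_const
  have hYc'm : Measurable Yc' := by
    rw [hYc']; exact Measurable.ite hYSm measurable_const measurable_const
  have hX'm : ∀ z, Measurable (X' z) := by
    intro z
    rw [hX']
    exact Measurable.ite (hXSm z) measurable_const measurable_const
  have hY0'm : Measurable Y0' := by
    rw [hY0']
    by_cases hi : i = 0
    · simpa [hi] using hYi'm
    · simpa [hi] using hYc'm
  have hY1'm : Measurable Y1' := by
    rw [hY1']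
    by_cases hi : i = 0
    · simpa [hi] using hYc'm
    · simpa [hi] using hYi'm
  -- characterizations
  have hXchar : ∀ z u, X' z u = i ↔ u ∈ XS z := by
    intro z u
    rw [hX']
    by_cases h : u ∈ XS z <;> simp [h, hne2' i]
  have hXchar' : ∀ z u, X' z u = 1 - i ↔ u ∉ XS z := by
    intro z u
    rw [hX']
    by_cases h : u ∈ XS z <;> simp [h, hne2 i]
  have hYij : ∀ u, Yi' u = j ↔ u ∈ Set.Ico (0:ℝ) g := by
    intro u
    rw [hYi']
    by_cases h : u ∈ Set.Ico (0:ℝ) g <;> simp [h, hne2' j]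
  have hYinj : ∀ u, Yi' u = 1 - j ↔ u ∉ Set.Ico (0:ℝ) g := by
    intro u
    rw [hYi']
    by_cases h : u ∈ Set.Ico (0:ℝ) g <;> simp [h, hne2 j]
  have hYc1 : ∀ u, Yc' u = 1 ↔ u ∈ YS := by
    intro u
    rw [hYc']
    by_cases h : u ∈ YS <;> simp [h]
  have hYc0 : ∀ u, Yc' u = 0 ↔ u ∉ YS := by
    intro u
    rw [hYc']
    by_cases h : u ∈ YS <;> simp [h]
  -- selector lemmas
  have hi01 : i = 0 ∨ i = 1 := hfin01 i
  have hsel_i : ∀ u, (if (i : Fin 2) = 0 then Y0' u else Y1' u) = Yi' u := by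
    intro u
    rcases hi01 with hi | hi <;> rw [hY0', hY1'] <;> simp [hi]
  have hsel_c : ∀ u, (if (1 - i : Fin 2) = 0 then Y0' u else Y1' u) = Yc' u := by
    intro u
    rcases hi01 with hi | hi
    · have h1 : (1 - i : Fin 2) ≠ 0 := by rw [hi]; decide
      rw [if_neg h1, hY1']
      simp [hi]
    · have h1 : (1 - i : Fin 2) = 0 := by rw [hi]; decide
      rw [if_pos h1, hY0']
      simp [hi]
  -- build the model
  refine ⟨{
    Ω := Fin K × ℝ
    m := inferInstance
    P := Pnew
    prob := hPnewprob
    Z := Prod.fst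
    Xz := fun z ω => X' z ω.2
    Y0 := fun ω => Y0' ω.2
    Y1 := fun ω => Y1' ω.2
    hZ := measurable_fst
    hXz := fun z => (hX'm z).comp measurable_snd
    hY0 := hY0'm.comp measurable_snd
    hY1 := hY1'm.comp measurable_snd
    indep := indep_fst_comp_snd ν μu (fun u => (Y0' u, Y1' u, fun z => X' z u))
      (hY0'm.prodMk (hY1'm.prodMk (measurable_pi_lambda _ hX'm)))
    law_Z := ?_
    law_cond := ?_ }, ?_⟩
  · -- law_Z
    intro z
    have hfz : (Prod.fst ⁻¹' {z} : Set (Fin K × ℝ)) = {z} ×ˢ Set.univ := by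
      ext ⟨w, u⟩; simp [eq_comm]
    rw [hfz, hPnew, Measure.prod_prod, hν_single z, measure_univ, mul_one,
      ENNReal.toReal_ofReal (hπpos z).le]
  · -- law_cond
    intro z x y
    obtain ⟨k1, k2, k3, k4, k5, k6, k7, k8, k9⟩ := hper' z
    have hs : MeasurableSet (Prod.fst ⁻¹' {z} : Set (Fin K × ℝ)) :=
      measurable_fst (measurableSet_singleton z)
    rw [ProbabilityTheory.cond_apply hs]
    set B : Set ℝ := {u | X' z u = x ∧ (if X' z u = 0 then Y0' u else Y1' u) = y} with hB
    have hBm : MeasurableSet B := by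
      have h1 : MeasurableSet {u | X' z u = x} := (hX'm z) (measurableSet_singleton x)
      have hmf : Measurable (fun u => if X' z u = 0 then Y0' u else Y1' u) :=
        Measurable.ite ((hX'm z) (measurableSet_singleton 0)) hY0'm hY1'm
      exact h1.inter (hmf (measurableSet_singleton y))
    have hsB : (Prod.fst ⁻¹' {z} : Set (Fin K × ℝ)) ∩
        {ω : Fin K × ℝ | X' ω.1 ω.2 = x ∧
          (if X' ω.1 ω.2 = 0 then Y0' ω.2 else Y1' ω.2) = y} = {z} ×ˢ B := by
      ext ⟨w, u⟩
      simp only [Set.mem_inter_iff, Set.mem_preimage, Set.mem_singleton_iff,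
        Set.mem_setOf_eq, Set.mem_prod, hB]
      constructor
      · rintro ⟨hw, h⟩; subst hw; exact ⟨rfl, h⟩
      · rintro ⟨hw, h⟩; subst hw; exact ⟨rfl, h⟩
    have hfz : (Prod.fst ⁻¹' {z} : Set (Fin K × ℝ)) = {z} ×ˢ Set.univ := by
      ext ⟨w, u⟩; simp [eq_comm]
    rw [hsB, hfz, hPnew, Measure.prod_prod, Measure.prod_prod, hν_single z, measure_univ,
      mul_one, ← mul_assoc,
      ENNReal.inv_mul_cancel (ENNReal.ofReal_pos.mpr (hπpos z)).ne' ENNReal.ofReal_ne_top,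
      one_mul]
    -- now : (μu B).toReal = p z x y
    rcases hfin x i with hx | hx
    · rw [hx] at hB ⊢
      have hBeq : B = XS z ∩ {u | Yi' u = y} := by
        ext u
        simp only [hB, Set.mem_setOf_eq, Set.mem_inter_iff]
        constructor
        · rintro ⟨h1, h2⟩
          rw [h1, hsel_i u] at h2
          exact ⟨(hXchar z u).mp h1, h2⟩
        · rintro ⟨hu, h2⟩
          have h1 : X' z u = i := (hXchar z u).mpr hu
          exact ⟨h1, by rw [h1, hsel_i u]; exact h2⟩
      rcases hfin y j with hy | hy
      · rw [hy] at hBeq ⊢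
        have hBeq2 : B ∩ Set.Ico (0:ℝ) 1
            = Set.Ico 0 (α1 z) ∪ Set.Ico m1 (m1 + (p z i j - α1 z)) := by
          rw [hBeq]
          ext u
          simp only [hXS, Set.mem_inter_iff, Set.mem_union, Set.mem_Ico, Set.mem_setOf_eq,
            hYij u]
          constructor
          · rintro ⟨⟨(((⟨h1, h2⟩ | ⟨h1, h2⟩) | ⟨h1, h2⟩) | ⟨h1, h2⟩), h3, h4⟩, h5, h6⟩
            · exact Or.inl ⟨h1, h2⟩
            · exact Or.inr ⟨h1, h2⟩
            · exfalso; linarith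
            · exfalso; linarith
          · rintro (⟨h1, h2⟩ | ⟨h1, h2⟩)
            · exact ⟨⟨Or.inl (Or.inl (Or.inl ⟨h1, h2⟩)), h1, by linarith⟩, h1, by linarith⟩
            · exact ⟨⟨Or.inl (Or.inl (Or.inr ⟨h1, h2⟩)), by linarith, by linarith⟩,
                by linarith, by linarith⟩
        rw [hμu, Measure.restrict_apply hBm, hBeq2,
          vol2' k1 k2 (by linarith)]
        ring
      · rw [hy] at hBeq ⊢
        have hBeq2 : B ∩ Set.Ico (0:ℝ) 1
            = Set.Ico g (g + β1 z) ∪ Set.Ico (g + n1) (g + n1 + (p z i (1-j) - β1 z)) := by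
          rw [hBeq]
          ext u
          simp only [hXS, Set.mem_inter_iff, Set.mem_union, Set.mem_Ico, Set.mem_setOf_eq,
            hYinj u, not_and, not_lt]
          constructor
          · rintro ⟨⟨(((⟨h1, h2⟩ | ⟨h1, h2⟩) | ⟨h1, h2⟩) | ⟨h1, h2⟩), h3⟩, h5, h6⟩
            · exfalso; have := h3 h1; linarith
            · exfalso; have := h3 (by linarith); linarith
            · exact Or.inl ⟨h1, h2⟩
            · exact Or.inr ⟨h1, h2⟩
          · rintro (⟨h1, h2⟩ | ⟨h1, h2⟩)
            · exact ⟨⟨Or.inl (Or.inr ⟨h1, h2⟩), fun _ => h1⟩, by linarith, by linarith⟩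
            · exact ⟨⟨Or.inr ⟨h1, h2⟩, fun _ => by linarith⟩, by linarith, by linarith⟩
        rw [hμu, Measure.restrict_apply hBm, hBeq2,
          vol2' (by linarith) (by linarith) (by linarith)]
        ring
    · rw [hx] at hB ⊢
      have hBeq : B = (XS z)ᶜ ∩ {u | Yc' u = y} := by
        ext u
        simp only [hB, Set.mem_setOf_eq, Set.mem_inter_iff, Set.mem_compl_iff]
        constructor
        · rintro ⟨h1, h2⟩
          rw [h1, hsel_c u] at h2
          exact ⟨(hXchar' z u).mp h1, h2⟩
        · rintro ⟨hu, h2⟩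
          have h1 : X' z u = 1 - i := (hXchar' z u).mpr hu
          exact ⟨h1, by rw [h1, hsel_c u]; exact h2⟩
      rcases hfin01 y with hy | hy
      · rw [hy] at hBeq ⊢
        have hBeq2 : B ∩ Set.Ico (0:ℝ) 1
            = Set.Ico (m1 + (p z i j - α1 z)) g
              ∪ Set.Ico (g + n1 + (p z i (1-j) - β1 z)) 1 := by
          rw [hBeq]
          ext u
          simp only [hXS, hYS, Set.mem_inter_iff, Set.mem_union, Set.mem_Ico,
            Set.mem_setOf_eq, Set.mem_compl_iff, hYc0 u, not_or, not_and, not_lt]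
          constructor
          · rintro ⟨⟨⟨⟨⟨hn1', hn2'⟩, hn3'⟩, hn4'⟩, hy1, hy2⟩, h5, h6⟩
            rcases le_or_gt g u with hgu | hgu
            · exact Or.inr ⟨hn4' (hy2 hgu), h6⟩
            · exact Or.inl ⟨hn2' (hy1 h5), hgu⟩
          · rintro (⟨h1, h2⟩ | ⟨h1, h2⟩)
            · refine ⟨⟨⟨⟨⟨fun _ => by linarith, fun _ => by linarith⟩,
                fun h => by linarith⟩, fun h => by linarith⟩,
                fun _ => by linarith, fun h => by linarith⟩, by linarith, by linarith⟩
            · refine ⟨⟨⟨⟨⟨fun _ => by linarith, fun _ => by linarith⟩,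
                fun _ => by linarith⟩, fun _ => by linarith⟩,
                fun _ => by linarith, fun _ => by linarith⟩, by linarith, h2⟩
        rw [hμu, Measure.restrict_apply hBm, hBeq2,
          vol2' (by linarith) (by linarith) (by linarith)]
        have := hsum z
        have := k9
        ring_nf
        linarith
      · rw [hy] at hBeq ⊢
        have hBeq2 : B ∩ Set.Ico (0:ℝ) 1
            = Set.Ico (α1 z) m1 ∪ Set.Ico (g + β1 z) (g + n1) := by
          rw [hBeq]
          ext u
          simp only [hXS, hYS, Set.mem_inter_iff, Set.mem_union, Set.mem_Ico,
            Set.mem_setOf_eq, Set.mem_compl_iff, hYc1 u, not_or, not_and, not_lt]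
          constructor
          · rintro ⟨⟨⟨⟨⟨hn1', hn2'⟩, hn3'⟩, hn4'⟩, hy⟩, h5, h6⟩
            rcases hy with ⟨hy1, hy2⟩ | ⟨hy1, hy2⟩
            · exact Or.inl ⟨hn1' hy1, hy2⟩
            · exact Or.inr ⟨hn3' hy1, hy2⟩
          · rintro (⟨h1, h2⟩ | ⟨h1, h2⟩)
            · refine ⟨⟨⟨⟨⟨fun _ => by linarith, fun h => by linarith⟩,
                fun h => by linarith⟩, fun h => by linarith⟩,
                Or.inl ⟨by linarith, h2⟩⟩, by linarith, by linarith⟩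
            · refine ⟨⟨⟨⟨⟨fun _ => by linarith, fun _ => by linarith⟩,
                fun _ => by linarith⟩, fun h => by linarith⟩,
                Or.inr ⟨by linarith, h2⟩⟩, by linarith, by linarith⟩
        rw [hμu, Measure.restrict_apply hBm, hBeq2,
          vol2' (by linarith) (by linarith) (by linarith)]
        linarith [k9]
  · -- the target probability
    have hset : {ω : Fin K × ℝ | (if i = 0 then Y0' ω.2 else Y1' ω.2) = j}
        = (Set.univ : Set (Fin K)) ×ˢ Set.Ico (0:ℝ) g := by
      ext ⟨w, u⟩
      simp only [Set.mem_setOf_eq, Set.mem_prod, Set.mem_univ, true_and]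
      rw [hsel_i u, hYij u]
    show (Pnew {ω : Fin K × ℝ | (if i = 0 then Y0' ω.2 else Y1' ω.2) = j}).toReal = g
    rw [hset, hPnew, Measure.prod_prod, hν_univ, one_mul, hμu,
      Measure.restrict_apply measurableSet_Ico,
      Set.inter_eq_left.mpr (Set.Ico_subset_Ico le_rfl hg1'), Real.volume_Ico,
      ENNReal.toReal_ofReal (by linarith)]
    ring

end Master


/-- sharpness of the bounds in Theorem 2: if the observed conditional laws
`p z` arise from some model satisfying assumption (i) with instrument law `π` (positive
everywhere), then for each `i, j ∈ {0,1}` there exists another such model — with the same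
instrument law `π` and the same observed conditional laws `p` — in which
`P(Y(xᵢ) = j) = g(i, j)`. -/
theorem stmt8 (K : ℕ) (hK : 2 ≤ K)
    (π : Fin K → ℝ) (hπpos : ∀ z, 0 < π z)
    (p : Fin K → Fin 2 → Fin 2 → ℝ)
    (hmodel : Nonempty (IVModel K π p)) :
    ∀ i j : Fin 2, ∃ M : IVModel K π p,
      (M.P {ω | (if i = 0 then M.Y0 ω else M.Y1 ω) = j}).toReal = gOf hK p i j := by
  intro i j
  obtain ⟨M0⟩ := hmodel
  exact master hK π hπpos p M0 i j
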